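/- Let f : ℝⁿ × ℝⁿ → ℝⁿ be continuously differentiable and globally Lipschitz in both arguments, τ > 0, and x₀ : [−τ, 0] → ℝⁿ continuous. Then there exists a unique continuous function x : [−τ, T] → ℝⁿ with x = x₀ on [−τ, 0], x differentiable on (0, T], and x'(t) = f(x(t), x(t−τ)) for all t ∈ (0, T]. -/

import Mathlib

open Set MeasureTheory intervalIntegral Function

namespace DDEHelper

variable {n : ℕ}

noncomputable def ev {τ T : ℝ} (hle : -τ ≤ T) (u : C(Icc (-τ) T, Fin n → ℝ)) (t : ℝ) :
    Fin n → ℝ :=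
  u (projIcc (-τ) T hle t)

lemma continuous_ev {τ T : ℝ} (hle : -τ ≤ T) (u : C(Icc (-τ) T, Fin n → ℝ)) :
    Continuous (ev hle u) :=
  u.continuous.comp continuous_projIcc

lemma ev_of_mem {τ T : ℝ} (hle : -τ ≤ T) (u : C(Icc (-τ) T, Fin n → ℝ)) {t : ℝ}
    (ht : t ∈ Icc (-τ) T) : ev hle u t = u ⟨t, ht⟩ := by
  simp [ev, projIcc_of_mem hle ht]

variable (f : (Fin n → ℝ) → (Fin n → ℝ) → (Fin n → ℝ)) (τ T : ℝ) (x₀ : ℝ → (Fin n → ℝ))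

lemma continuous_F (hfc : Continuous (uncurry f)) (hle : -τ ≤ T)
    (u : C(Icc (-τ) T, Fin n → ℝ)) :
    Continuous fun s => f (ev hle u s) (ev hle u (s - τ)) :=
  hfc.comp ((continuous_ev hle u).prodMk ((continuous_ev hle u).comp (continuous_sub_right τ)))

/-- The Picard iteration map for the delay differential equation. -/
noncomputable def Phi (hfc : Continuous (uncurry f)) (hτ : 0 < τ) (hT : 0 < T)
    (hle : -τ ≤ T) (hx₀ : ContinuousOn x₀ (Icc (-τ) 0))
    (u : C(Icc (-τ) T, Fin n → ℝ)) : C(Icc (-τ) T, Fin n → ℝ) where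
  toFun t := x₀ (min (↑t) 0) +
    ∫ s in (0:ℝ)..(max (↑t) 0), f (ev hle u s) (ev hle u (s - τ))
  continuous_toFun := by
    apply Continuous.add
    · apply hx₀.comp_continuous (continuous_subtype_val.min continuous_const)
      intro t
      exact ⟨le_min t.2.1 (by linarith), min_le_right _ _⟩
    · exact (continuous_primitive
        (fun a b => (continuous_F f τ T hfc hle u).intervalIntegrable a b) 0).comp
        (continuous_subtype_val.max continuous_const)

lemma Phi_apply (hfc : Continuous (uncurry f)) (hτ : 0 < τ) (hT : 0 < T)
    (hle : -τ ≤ T) (hx₀ : ContinuousOn x₀ (Icc (-τ) 0))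
    (u : C(Icc (-τ) T, Fin n → ℝ)) (t : Icc (-τ) T) :
    Phi f τ T x₀ hfc hτ hT hle hx₀ u t =
      x₀ (min (↑t) 0) + ∫ s in (0:ℝ)..(max (↑t) 0), f (ev hle u s) (ev hle u (s - τ)) :=
  rfl

lemma Phi_nonpos (hfc : Continuous (uncurry f)) (hτ : 0 < τ) (hT : 0 < T)
    (hle : -τ ≤ T) (hx₀ : ContinuousOn x₀ (Icc (-τ) 0))
    (u : C(Icc (-τ) T, Fin n → ℝ)) (t : Icc (-τ) T) (ht : (↑t : ℝ) ≤ 0) :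
    Phi f τ T x₀ hfc hτ hT hle hx₀ u t = x₀ ↑t := by
  rw [Phi_apply, min_eq_left ht, max_eq_right ht, integral_same, add_zero]

/-- Key factorial estimate for iterates of the Picard map. -/
lemma key_estimate {K : NNReal} (hfc : Continuous (uncurry f))
    (hlip : LipschitzWith K (uncurry f)) (hτ : 0 < τ) (hT : 0 < T)
    (hle : -τ ≤ T) (hx₀ : ContinuousOn x₀ (Icc (-τ) 0))
    (u v : C(Icc (-τ) T, Fin n → ℝ)) :
    ∀ m : ℕ, ∀ t : Icc (-τ) T,
      dist ((Phi f τ T x₀ hfc hτ hT hle hx₀)^[m] u t) ((Phi f τ T x₀ hfc hτ hT hle hx₀)^[m] v t)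
        ≤ (K : ℝ) ^ m * max (↑t) 0 ^ m / (Nat.factorial m) * dist u v := by
  intro m
  induction m with
  | zero =>
    intro t
    simpa using ContinuousMap.dist_apply_le_dist (f := u) (g := v) t
  | succ m ih =>
    intro t
    set Φ := Phi f τ T x₀ hfc hτ hT hle hx₀ with hΦ
    set U := Φ^[m] u with hU
    set V := Φ^[m] v with hV
    have hiter : Φ^[m+1] u = Φ U ∧ Φ^[m+1] v = Φ V := by
      constructor <;> rw [Function.iterate_succ_apply']
    rw [hiter.1, hiter.2]
    set a := max (↑t : ℝ) 0 with ha
    have ha0 : 0 ≤ a := le_max_right _ _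
    have haT : a ≤ T := max_le t.2.2 hT.le
    have hFU := continuous_F f τ T hfc hle U
    have hFV := continuous_F f τ T hfc hle V
    -- the difference of the two applications is a single integral
    have hd : dist (Φ U t) (Φ V t) =
        ‖∫ s in (0:ℝ)..a, (f (ev hle U s) (ev hle U (s - τ)) -
          f (ev hle V s) (ev hle V (s - τ)))‖ := by
      rw [Phi_apply, Phi_apply, dist_eq_norm, add_sub_add_left_eq_sub, ← ha,
        ← intervalIntegral.integral_sub (hFU.intervalIntegrable _ _) (hFV.intervalIntegrable _ _)]
    rw [hd]
    -- pointwise estimate of the integrand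
    have hpt : ∀ s ∈ Icc (0:ℝ) a,
        ‖f (ev hle U s) (ev hle U (s - τ)) - f (ev hle V s) (ev hle V (s - τ))‖ ≤
          (K : ℝ) * ((K : ℝ) ^ m * s ^ m / (Nat.factorial m) * dist u v) := by
      intro s hs
      have hs1 : s ∈ Icc (-τ) T := ⟨by linarith [hs.1], hs.2.trans haT⟩
      have hs2 : s - τ ∈ Icc (-τ) T := ⟨by linarith [hs.1], by linarith [hs.2.trans haT]⟩
      rw [ev_of_mem hle U hs1, ev_of_mem hle V hs1, ev_of_mem hle U hs2, ev_of_mem hle V hs2,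
        ← dist_eq_norm]
      have h1 := hlip.dist_le_mul (U ⟨s, hs1⟩, U ⟨s - τ, hs2⟩) (V ⟨s, hs1⟩, V ⟨s - τ, hs2⟩)
      simp only [uncurry, Prod.dist_eq] at h1
      have e1 : dist (U ⟨s, hs1⟩) (V ⟨s, hs1⟩) ≤
          (K : ℝ) ^ m * s ^ m / (Nat.factorial m) * dist u v := by
        have := ih ⟨s, hs1⟩
        rwa [max_eq_left hs.1] at this
      have e2 : dist (U ⟨s - τ, hs2⟩) (V ⟨s - τ, hs2⟩) ≤
          (K : ℝ) ^ m * s ^ m / (Nat.factorial m) * dist u v := by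
        refine (ih ⟨s - τ, hs2⟩).trans ?_
        have hmax : max (s - τ) 0 ≤ s := max_le (by linarith [hs.1]) hs.1
        gcongr
      exact h1.trans (mul_le_mul_of_nonneg_left (max_le e1 e2) K.2)
    -- integrate the estimate
    have hnorm : ‖∫ s in (0:ℝ)..a, (f (ev hle U s) (ev hle U (s - τ)) -
          f (ev hle V s) (ev hle V (s - τ)))‖ ≤
        ∫ s in (0:ℝ)..a, ‖f (ev hle U s) (ev hle U (s - τ)) -
          f (ev hle V s) (ev hle V (s - τ))‖ :=
      intervalIntegral.norm_integral_le_integral_norm ha0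
    refine hnorm.trans ?_
    have hint1 : IntervalIntegrable (fun s => ‖f (ev hle U s) (ev hle U (s - τ)) -
        f (ev hle V s) (ev hle V (s - τ))‖) volume 0 a :=
      ((hFU.sub hFV).norm).intervalIntegrable _ _
    have hint2 : IntervalIntegrable
        (fun s => (K : ℝ) * ((K : ℝ) ^ m * s ^ m / (Nat.factorial m) * dist u v)) volume 0 a := by
      apply Continuous.intervalIntegrable
      fun_prop
    have hmono := intervalIntegral.integral_mono_on ha0 hint1 hint2 hpt
    refine hmono.trans ?_
    have hval : ∫ s in (0:ℝ)..a, (K : ℝ) * ((K : ℝ) ^ m * s ^ m / (Nat.factorial m) * dist u v)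
        = (K : ℝ) ^ (m+1) * (a ^ (m+1) / (m+1)) / (Nat.factorial m) * dist u v := by
      have : ∀ s : ℝ, (K : ℝ) * ((K : ℝ) ^ m * s ^ m / (Nat.factorial m) * dist u v)
          = ((K : ℝ) ^ (m+1) / (Nat.factorial m) * dist u v) * s ^ m := by
        intro s; ring
      simp only [this]
      rw [intervalIntegral.integral_const_mul, integral_pow]
      push_cast
      ring
    rw [hval, Nat.factorial_succ]
    push_cast
    have h1 : (0:ℝ) < (m:ℝ) + 1 := by positivity
    have h2 : (0:ℝ) < (Nat.factorial m : ℝ) := by positivity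
    apply le_of_eq
    field_simp <;> ring

end DDEHelper

open DDEHelper

/-- Existence and uniqueness for a delay differential equation with a single constant delay,
globally Lipschitz C¹ right-hand side, and continuous history, on the horizon `[-τ, T]`. -/
theorem dde_existence_uniqueness {n : ℕ}
    (f : (Fin n → ℝ) → (Fin n → ℝ) → (Fin n → ℝ))
    (hf : ContDiff ℝ 1 (Function.uncurry f))
    (K : NNReal) (hlip : LipschitzWith K (Function.uncurry f))
    (τ T : ℝ) (hτ : 0 < τ) (hT : 0 < T)
    (x₀ : ℝ → (Fin n → ℝ)) (hx₀ : ContinuousOn x₀ (Icc (-τ) 0)) :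
    ∃ x : ℝ → (Fin n → ℝ),
      (ContinuousOn x (Icc (-τ) T) ∧
        (∀ t ∈ Icc (-τ) (0:ℝ), x t = x₀ t) ∧
        (∀ t ∈ Ioc (0:ℝ) T, HasDerivAt x (f (x t) (x (t - τ))) t)) ∧
      ∀ z : ℝ → (Fin n → ℝ),
        (ContinuousOn z (Icc (-τ) T) ∧
          (∀ t ∈ Icc (-τ) (0:ℝ), z t = x₀ t) ∧
          (∀ t ∈ Ioc (0:ℝ) T, HasDerivAt z (f (z t) (z (t - τ))) t)) →
        EqOn x z (Icc (-τ) T) := by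
  have hfc : Continuous (Function.uncurry f) := hf.continuous
  have hle : -τ ≤ T := by linarith
  haveI : CompactSpace (Icc (-τ) T) := isCompact_iff_compactSpace.mp isCompact_Icc
  haveI : Nonempty C(Icc (-τ) T, Fin n → ℝ) := ⟨ContinuousMap.const _ 0⟩
  set Φ := Phi f τ T x₀ hfc hτ hT hle hx₀ with hΦdef
  -- a uniform contraction estimate for iterates
  have hiter_dist : ∀ m : ℕ, ∀ u v : C(Icc (-τ) T, Fin n → ℝ),
      dist (Φ^[m] u) (Φ^[m] v) ≤ ((K : ℝ) * T) ^ m / (Nat.factorial m) * dist u v := by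
    intro m u v
    have hb : (0:ℝ) ≤ ((K : ℝ) * T) ^ m / (Nat.factorial m) * dist u v := by positivity
    rw [ContinuousMap.dist_le hb]
    intro t
    refine (key_estimate f τ T x₀ hfc hlip hτ hT hle hx₀ u v m t).trans ?_
    have h1 : max (↑t : ℝ) 0 ^ m ≤ T ^ m :=
      pow_le_pow_left₀ (le_max_right _ _) (max_le t.2.2 hT.le) m
    have h2 : (K : ℝ) ^ m * max (↑t : ℝ) 0 ^ m ≤ (K : ℝ) ^ m * T ^ m :=
      mul_le_mul_of_nonneg_left h1 (by positivity)
    rw [mul_pow]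
    apply mul_le_mul_of_nonneg_right _ dist_nonneg
    apply div_le_div_of_nonneg_right h2 (by positivity)
  -- choose m making the iterate a contraction
  obtain ⟨m, hm⟩ : ∃ m : ℕ, ((K : ℝ) * T) ^ m / (Nat.factorial m) < 1 :=
    ((FloorSemiring.tendsto_pow_div_factorial_atTop ((K : ℝ) * T)).eventually
      (gt_mem_nhds one_pos)).exists
  have hm0 : (0:ℝ) ≤ ((K : ℝ) * T) ^ m / (Nat.factorial m) := by positivity
  have hcontr : ContractingWith (Real.toNNReal (((K : ℝ) * T) ^ m / (Nat.factorial m))) (Φ^[m]) := by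
    constructor
    · exact_mod_cast Real.toNNReal_lt_one.mpr hm
    · apply LipschitzWith.of_dist_le_mul
      intro u v
      rw [Real.coe_toNNReal _ hm0]
      exact hiter_dist m u v
  set p := ContractingWith.fixedPoint (Φ^[m]) hcontr with hpdef
  have hp : Function.IsFixedPt (Φ^[m]) p := hcontr.fixedPoint_isFixedPt
  have hΦp : Function.IsFixedPt (Φ^[m]) (Φ p) := by
    show Φ^[m] (Φ p) = Φ p
    rw [← Function.iterate_succ_apply, Function.iterate_succ_apply', hp]
  have hfix : Φ p = p := hcontr.fixedPoint_unique' hΦp hp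
  have huniq : ∀ q : C(Icc (-τ) T, Fin n → ℝ), Φ q = q → q = p := by
    intro q hq
    exact hcontr.fixedPoint_unique' (Function.IsFixedPt.iterate hq m) hp
  -- the candidate solution
  set w : ℝ → (Fin n → ℝ) := ev hle p with hwdef
  set G : ℝ → (Fin n → ℝ) := fun s => f (w s) (w (s - τ)) with hGdef
  have hGc : Continuous G := continuous_F f τ T hfc hle p
  have hp_eq : ∀ t : Icc (-τ) T,
      p t = x₀ (min (↑t) 0) + ∫ s in (0:ℝ)..(max (↑t) 0), G s := by
    intro t
    conv_lhs => rw [← hfix]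
    rfl
  set x : ℝ → (Fin n → ℝ) := fun t => w (min t 0) + ∫ s in (0:ℝ)..(max t 0), G s with hxdef
  have hw_mem : ∀ t (ht : t ∈ Icc (-τ) T), w t = p ⟨t, ht⟩ := fun t ht => ev_of_mem hle p ht
  have hw_nonpos : ∀ t (ht : t ∈ Icc (-τ) T), t ≤ 0 → w t = x₀ t := by
    intro t ht h0
    rw [hw_mem t ht, hp_eq]
    simp [min_eq_left h0, max_eq_right h0]
  have hxw : ∀ t ∈ Icc (-τ) T, x t = w t := by
    intro t ht
    have hmin : min t 0 ∈ Icc (-τ) T := ⟨le_min ht.1 (by linarith), (min_le_right _ _).trans hT.le⟩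
    have : w (min t 0) = x₀ (min t 0) :=
      hw_nonpos _ hmin (min_le_right _ _)
    rw [hxdef]
    simp only [this]
    rw [hw_mem t ht, hp_eq]
  have hxcont : Continuous x := by
    apply Continuous.add
    · exact (continuous_ev hle p).comp (continuous_id.min continuous_const)
    · exact (continuous_primitive (fun a b => hGc.intervalIntegrable a b) 0).comp
        (continuous_id.max continuous_const)
  refine ⟨x, ⟨hxcont.continuousOn, ?_, ?_⟩, ?_⟩
  · -- agrees with history
    intro t ht
    have ht' : t ∈ Icc (-τ) T := ⟨ht.1, ht.2.trans hT.le⟩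
    rw [hxw t ht']
    exact hw_nonpos t ht' ht.2
  · -- satisfies the DDE
    intro t ht
    have h1 : HasDerivAt (fun r : ℝ => w (min r 0) + ∫ s in (0:ℝ)..(max r 0), G s) (G t) t := by
      have h2 : HasDerivAt (fun r : ℝ => w 0 + ∫ s in (0:ℝ)..r, G s) (G t) t :=
        (intervalIntegral.integral_hasDerivAt_right (hGc.intervalIntegrable _ _)
          hGc.stronglyMeasurable.stronglyMeasurableAtFilter hGc.continuousAt).const_add _
      apply h2.congr_of_eventuallyEq
      filter_upwards [Ioi_mem_nhds ht.1] with r hr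
      rw [min_eq_right (le_of_lt hr), max_eq_left (le_of_lt hr)]
    have hxt : x t = w t := hxw t ⟨by linarith [ht.1], ht.2⟩
    have hxtτ : x (t - τ) = w (t - τ) := hxw (t - τ) ⟨by linarith [ht.1], by linarith [ht.2]⟩
    have hG : G t = f (x t) (x (t - τ)) := by rw [hxt, hxtτ]
    rw [← hG]
    exact h1
  · -- uniqueness
    rintro z ⟨hzc, hz0, hzd⟩
    set Z : C(Icc (-τ) T, Fin n → ℝ) := ⟨(Icc (-τ) T).restrict z, hzc.restrict⟩ with hZdef
    have hZfix : Φ Z = Z := by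
      refine ContinuousMap.ext fun t => ?_
      rcases le_or_gt (↑t : ℝ) 0 with ht | ht
      · rw [Phi_nonpos f τ T x₀ hfc hτ hT hle hx₀ Z t ht]
        exact (hz0 ↑t ⟨t.2.1, ht⟩).symm
      · rw [Phi_apply, min_eq_right ht.le, max_eq_left ht.le]
        have htT : (↑t : ℝ) ≤ T := t.2.2
        -- rewrite the integrand in terms of z
        have hintg : EqOn (fun s => f (ev hle Z s) (ev hle Z (s - τ)))
            (fun s => f (z s) (z (s - τ))) (uIcc 0 ↑t) := by
          intro s hs
          rw [uIcc_of_le ht.le] at hs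
          have hs1 : s ∈ Icc (-τ) T := ⟨by linarith [hs.1], hs.2.trans htT⟩
          have hs2 : s - τ ∈ Icc (-τ) T := ⟨by linarith [hs.1], by linarith [hs.2.trans htT]⟩
          simp only [ev_of_mem hle Z hs1, ev_of_mem hle Z hs2]
          rfl
        rw [intervalIntegral.integral_congr hintg]
        -- FTC for z
        have hzcont : ContinuousOn z (Icc 0 ↑t) :=
          hzc.mono (Icc_subset_Icc (by linarith) htT)
        have hderiv : ∀ s ∈ Ioo (0:ℝ) ↑t, HasDerivWithinAt z (f (z s) (z (s - τ))) (Ioi s) s :=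
          fun s hs => (hzd s ⟨hs.1, hs.2.le.trans htT⟩).hasDerivWithinAt
        have hc1 : ContinuousOn (fun s : ℝ => z s) (Icc 0 ↑t) := hzcont
        have hc2 : ContinuousOn (fun s : ℝ => z (s - τ)) (Icc 0 ↑t) := by
          apply hzc.comp (continuous_sub_right τ).continuousOn
          intro s hs
          exact ⟨by simp only; linarith [hs.1], by simp only; linarith [hs.2.trans htT]⟩
        have hint : IntervalIntegrable (fun s => f (z s) (z (s - τ))) volume 0 ↑t := by
          apply ContinuousOn.intervalIntegrable
          rw [uIcc_of_le ht.le]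
          exact hfc.comp_continuousOn (hc1.prodMk hc2)
        have hFTC : ∫ s in (0:ℝ)..↑t, f (z s) (z (s - τ)) = z ↑t - z 0 :=
          intervalIntegral.integral_eq_sub_of_hasDeriv_right_of_le ht.le hzcont hderiv hint
        have hz00 : z 0 = x₀ 0 := hz0 0 ⟨by linarith, le_refl _⟩
        rw [hFTC, hz00]
        show x₀ 0 + (z ↑t - x₀ 0) = z ↑t
        abel
    have hZp : Z = p := huniq Z hZfix
    intro t ht
    have : z t = Z ⟨t, ht⟩ := rfl
    rw [hxw t ht, hw_mem t ht, ← hZp, this]
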